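/- (a) For every (z, w₁, w₂) ∈ M one has the identity w₁ − i w₂ = conj(w₁ + i w₂) + i|z|² + |z|⁴; consequently G(M) ⊆ M', i.e., for every (z, w₁, w₂) ∈ M the point G(z, w₁, w₂) satisfies (w₁ − i w₂)² = (conj(w₁ + i w₂) + i|z|² + |z|⁴)², so the image point lies on M'. (b) The restriction of G to M is injective: if p, q ∈ M and G(p) = G(q), then p = q. (Claims of Example 8.6: the finite holomorphic map G restricted to the finite-type generic submanifold M is a diffeomorphism onto the CR singular image M'.) -/

import Mathlib

open Complex

/-- Example 8.6: the finite holomorphic map G(z, w₁, w₂) = (z, w₁ + iw₂, (w₁ − iw₂)²)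
restricted to M = {Im w₁ = |z|²/2, Im w₂ = |z|⁴/2} satisfies the identity
w₁ − iw₂ = conj(w₁ + iw₂) + i|z|² + |z|⁴, maps M into M', and is injective on M. -/
theorem stmt12 (M M' : Set (ℂ × ℂ × ℂ)) (G : ℂ × ℂ × ℂ → ℂ × ℂ × ℂ)
    (hM : M = {p : ℂ × ℂ × ℂ |
      p.2.1.im = ‖p.1‖ ^ 2 / 2 ∧ p.2.2.im = ‖p.1‖ ^ 4 / 2})
    (hM' : M' = {q : ℂ × ℂ × ℂ |
      q.2.2 = (starRingEnd ℂ q.2.1 + I * ((‖q.1‖ ^ 2 : ℝ) : ℂ)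
        + ((‖q.1‖ ^ 4 : ℝ) : ℂ)) ^ 2})
    (hG : ∀ p : ℂ × ℂ × ℂ, G p = (p.1, p.2.1 + I * p.2.2, (p.2.1 - I * p.2.2) ^ 2)) :
    (∀ p ∈ M, p.2.1 - I * p.2.2 =
      starRingEnd ℂ (p.2.1 + I * p.2.2) + I * ((‖p.1‖ ^ 2 : ℝ) : ℂ)
        + ((‖p.1‖ ^ 4 : ℝ) : ℂ)) ∧
    (∀ p ∈ M, G p ∈ M') ∧
    (∀ p ∈ M, ∀ q ∈ M, G p = G q → p = q) := by
  subst hM hM'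
  have key : ∀ p : ℂ × ℂ × ℂ,
      (p.2.1.im = ‖p.1‖ ^ 2 / 2 ∧ p.2.2.im = ‖p.1‖ ^ 4 / 2) →
      p.2.1 - I * p.2.2 =
        starRingEnd ℂ (p.2.1 + I * p.2.2) + I * ((‖p.1‖ ^ 2 : ℝ) : ℂ)
          + ((‖p.1‖ ^ 4 : ℝ) : ℂ) := by
    rintro ⟨z, w₁, w₂⟩ ⟨h1, h2⟩
    rw [Complex.ext_iff]
    simp only [Complex.sub_re, Complex.sub_im, Complex.add_re, Complex.add_im,
      Complex.mul_re, Complex.mul_im, Complex.conj_re, Complex.conj_im,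
      Complex.I_re, Complex.I_im, Complex.ofReal_re, Complex.ofReal_im] at *
    constructor <;> [skip; skip] <;> · simp only [h1, h2]; ring
  refine ⟨key, ?_, ?_⟩
  · intro p hp
    simp only [Set.mem_setOf_eq, hG]
    rw [key p hp]
  · rintro p hp q hq hGpq
    rw [hG p, hG q, Prod.mk.injEq, Prod.mk.injEq] at hGpq
    obtain ⟨h1, h2, h3⟩ := hGpq
    have e1 := key p hp
    have e2 := key q hq
    rw [h1] at e1
    have h4 : p.2.1 - I * p.2.2 = q.2.1 - I * q.2.2 := by rw [e1, e2, h2]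
    have hw1 : p.2.1 = q.2.1 := by linear_combination (h2 + h4) / 2
    have hw2 : p.2.2 = q.2.2 := by
      have h5 : I * p.2.2 = I * q.2.2 := by linear_combination (h2 - h4) / 2
      exact mul_left_cancel₀ I_ne_zero h5
    exact Prod.ext h1 (Prod.ext hw1 hw2)
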